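/- Let n ≥ 3 and let m be an integer with 2 ≤ m ≤ n − 1. Let K₁ and K₂ be nonempty compact convex sets in ℝⁿ. Then K₁ and K₂ are homothetic if and only if for every m-dimensional plane L of ℝⁿ the orthogonal projections π_L(K₁) and π_L(K₂) are homothetic (where the homothety ratio may depend on the projection plane L). -/

import Mathlib

/-- Nonempty sets `X₁` and `X₂` in `ℝⁿ` are *homothetic* provided
`X₁ = z + λ • X₂` for some point `z` and some scalar `λ ≠ 0`. -/
def Homothetic {n : ℕ} (X₁ X₂ : Set (EuclideanSpace ℝ (Fin n))) : Prop :=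
  ∃ (z : EuclideanSpace ℝ (Fin n)) (l : ℝ), l ≠ 0 ∧ X₁ = (fun x => z + l • x) '' X₂

/-- The orthogonal projection of `ℝⁿ` onto the plane `p + L`. -/
noncomputable def planeProj {n : ℕ} (p : EuclideanSpace ℝ (Fin n))
    (L : Submodule ℝ (EuclideanSpace ℝ (Fin n))) (x : EuclideanSpace ℝ (Fin n)) :
    EuclideanSpace ℝ (Fin n) :=
  p + (L.orthogonalProjectionOnto (x - p) : EuclideanSpace ℝ (Fin n))

noncomputable section

/-- additivity defect -/
def dlt {V : Type*} [AddCommGroup V] (f : V → ℝ) (u v : V) : ℝ :=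
  f (u + v) - f u - f v

/-- `f` is linear on the plane spanned by `u, v` (as far as additivity defects go). -/
def LinOn {V : Type*} [AddCommGroup V] [Module ℝ V] (f : V → ℝ) (u v : V) : Prop :=
  ∀ s t s' t' : ℝ, dlt f (s • u + t • v) (s' • u + t' • v) = 0

variable {V : Type*} [AddCommGroup V] [Module ℝ V]

theorem homog_zero {f : V → ℝ} (hf : ∀ (t : ℝ) u, f (t • u) = t * f u) : f 0 = 0 := by
  have := hf 0 0
  simpa using this

theorem linOn_line {f : V → ℝ} (hf : ∀ (t : ℝ) u, f (t • u) = t * f u) (u : V) (r : ℝ) :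
    LinOn f u (r • u) := by
  intro s t s' t'
  unfold dlt
  rw [smul_smul, smul_smul, ← add_smul, ← add_smul]
  have h2 : (s + t * r) • u + (s' + t' * r) • u = ((s + t * r) + (s' + t' * r)) • u := by
    rw [← add_smul]
  rw [h2, hf, hf, hf]
  ring

theorem linOn_eval {f : V → ℝ} (hf : ∀ (t : ℝ) u, f (t • u) = t * f u) {u v : V}
    (h : LinOn f u v) (s t : ℝ) : f (s • u + t • v) = s * f u + t * f v := by
  have h1 := h s 0 0 t
  simp only [dlt, zero_smul, add_zero, zero_add] at h1
  have : f (s • u + t • v) = f (s • u) + f (t • v) := by linarith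
  rw [this, hf, hf]

theorem linOn_add {f : V → ℝ} {u v : V} (h : LinOn f u v) (s t s' t' : ℝ) :
    f ((s • u + t • v) + (s' • u + t' • v)) = f (s • u + t • v) + f (s' • u + t' • v) := by
  have h1 := h s t s' t'
  simp only [dlt] at h1
  linarith

end

noncomputable section Lem3

open Filter Topology

abbrev V3 := ℝ × ℝ × ℝ

def E1 : V3 := (1, 0, 0)
def E2 : V3 := (0, 1, 0)
def E3 : V3 := (0, 0, 1)

theorem lem3 {f g : V3 → ℝ} (hfc : Continuous f) (hgc : Continuous g)
    (hfh : ∀ (t : ℝ) u, f (t • u) = t * f u) (hgh : ∀ (t : ℝ) u, g (t • u) = t * g u)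
    (hyp : ∀ u v, LinOn f u v ∨ LinOn g u v)
    (hg : dlt g E1 E2 ≠ 0) (a b : V3) (hf : dlt f a b ≠ 0) : False := by
  -- Step ε : nearby tilted planes keep the g-defect nonzero
  obtain ⟨ε, hε, hεne⟩ : ∃ ε > 0, ∀ p q : ℝ, |p| < ε → |q| < ε →
      dlt g (E1 + p • E3) (E2 + q • E3) ≠ 0 := by
    have hc : Continuous fun pq : ℝ × ℝ => dlt g (E1 + pq.1 • E3) (E2 + pq.2 • E3) := by
      have h1 : Continuous fun pq : ℝ × ℝ => E1 + pq.1 • E3 :=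
        continuous_const.add (continuous_fst.smul continuous_const)
      have h2 : Continuous fun pq : ℝ × ℝ => E2 + pq.2 • E3 :=
        continuous_const.add (continuous_snd.smul continuous_const)
      exact ((hgc.comp (h1.add h2)).sub (hgc.comp h1)).sub (hgc.comp h2)
    have hopen : IsOpen {pq : ℝ × ℝ | dlt g (E1 + pq.1 • E3) (E2 + pq.2 • E3) ≠ 0} := by
      have := isOpen_compl_singleton (x := (0:ℝ))
      exact this.preimage hc
    have hmem : ((0:ℝ), (0:ℝ)) ∈ {pq : ℝ × ℝ | dlt g (E1 + pq.1 • E3) (E2 + pq.2 • E3) ≠ 0} := by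
      simpa using hg
    obtain ⟨ε, hε, hball⟩ := Metric.isOpen_iff.mp hopen _ hmem
    refine ⟨ε, hε, fun p q hp hq => ?_⟩
    have : ((p, q) : ℝ × ℝ) ∈ Metric.ball ((0:ℝ), (0:ℝ)) ε := by
      rw [Metric.mem_ball, Prod.dist_eq]
      simp only [Real.dist_eq, sub_zero]
      exact max_lt hp hq
    exact hball this
  -- those tilted planes are f-linear
  have hLin : ∀ p q : ℝ, |p| < ε → |q| < ε → LinOn f (E1 + p • E3) (E2 + q • E3) := by
    intro p q hp hq
    rcases hyp (E1 + p • E3) (E2 + q • E3) with h | h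
    · exact h
    · exfalso
      apply hεne p q hp hq
      have := h 1 0 0 1
      simpa using this
  set A : ℝ → ℝ := fun p => f (E1 + p • E3) with hA_def
  set B : ℝ → ℝ := fun q => f (E2 + q • E3) with hB_def
  have keyvec : ∀ α β p q : ℝ, α • (E1 + p • E3) + β • (E2 + q • E3)
      = ((α, β, α * p + β * q) : V3) := by
    intro α β p q
    simp [E1, E2, E3, Prod.ext_iff]
  have F1 : ∀ α β p q : ℝ, |p| < ε → |q| < ε →
      f ((α, β, α * p + β * q) : V3) = α * A p + β * B q := by
    intro α β p q hp hq
    rw [← keyvec]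
    exact linOn_eval hfh (hLin p q hp hq) α β
  set s₀ : ℝ := ε / 2 with hs₀_def
  have hs₀ : s₀ ≠ 0 := by positivity
  have hs₀ε : |s₀| < ε := by rw [abs_of_pos (by positivity)]; linarith
  have h0ε : |(0 : ℝ)| < ε := by simpa using hε
  set k : ℝ := (A s₀ - A 0) / s₀ with hk_def
  have hkmul : k * s₀ = A s₀ - A 0 := by rw [hk_def]; field_simp
  have hψ : ∀ t : ℝ, |t| < ε → B t = B 0 + k * t := by
    intro t ht
    have e1 := F1 t s₀ s₀ 0 hs₀ε h0ε
    have e2 := F1 t s₀ 0 t h0ε ht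
    rw [show t * s₀ + s₀ * 0 = t * s₀ by ring] at e1
    rw [show t * 0 + s₀ * t = t * s₀ by ring] at e2
    rw [e1] at e2
    exact mul_right_cancel₀ hs₀ (by linear_combination - e2 - t * hkmul)
  have hφ : ∀ s : ℝ, |s| < ε → A s = A 0 + k * s := by
    intro s hs
    have e1 := F1 s₀ s 0 s₀ h0ε hs₀ε
    have e2 := F1 s₀ s s 0 hs h0ε
    rw [show s₀ * 0 + s * s₀ = s * s₀ by ring] at e1
    rw [show s₀ * s + s * 0 = s * s₀ by ring] at e2
    rw [e1] at e2
    have hBs := hψ s₀ hs₀ε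
    exact mul_right_cancel₀ hs₀ (by linear_combination - e2 + s * hBs)
  -- the candidate linear function and the correction term
  set cs : V3 → ℝ := fun v => v.1 * A 0 + v.2.1 * B 0 + v.2.2 * k with hcs_def
  set f' : V3 → ℝ := fun v => f v - cs v with hf'_def
  have hdlt' : ∀ u v : V3, dlt f' u v = dlt f u v := by
    intro u v
    simp only [dlt, hf'_def, hcs_def, Prod.fst_add, Prod.snd_add]
    ring
  have hf'h : ∀ (t : ℝ) (v : V3), f' (t • v) = t * f' v := by
    intro t v
    simp only [hf'_def, hcs_def, hfh, Prod.smul_fst, Prod.smul_snd, smul_eq_mul]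
    ring
  have hcsc : Continuous cs :=
    ((continuous_fst.mul continuous_const).add
      (continuous_snd.fst.mul continuous_const)).add
      (continuous_snd.snd.mul continuous_const)
  have hf'c : Continuous f' := hfc.sub hcsc
  have hLin' : ∀ u v : V3, LinOn f u v → LinOn f' u v := by
    intro u v h s t s' t'
    rw [hdlt']
    exact h s t s' t'
  -- region where f' vanishes
  set Rset : Set V3 := {v | |v.2.2| < ε * |v.1| ∨ |v.2.2| < ε * |v.2.1|} with hR_def
  have hRopen : IsOpen Rset := by
    apply IsOpen.union
    · exact isOpen_lt continuous_snd.snd.abs (continuous_const.mul continuous_fst.abs)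
    · exact isOpen_lt continuous_snd.snd.abs (continuous_const.mul continuous_snd.fst.abs)
  have hveta : ∀ v : V3, ((v.1, v.2.1, v.2.2) : V3) = v := fun v => rfl
  have hR : ∀ v ∈ Rset, f' v = 0 := by
    intro v hv
    rcases hv with h1 | h1
    · have hv1 : v.1 ≠ 0 := by
        intro h
        rw [h] at h1
        simp only [abs_zero, mul_zero] at h1
        linarith [abs_nonneg v.2.2]
      have hp : |v.2.2 / v.1| < ε := by
        rw [abs_div, div_lt_iff₀ (abs_pos.mpr hv1)]
        exact h1
      have e := F1 v.1 v.2.1 (v.2.2 / v.1) 0 hp h0ε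
      rw [show v.1 * (v.2.2 / v.1) + v.2.1 * 0 = v.2.2 by field_simp; ring] at e
      rw [hveta v] at e
      have hAp := hφ _ hp
      simp only [hf'_def, hcs_def]
      rw [e, hAp]
      field_simp
      ring
    · have hv1 : v.2.1 ≠ 0 := by
        intro h
        rw [h] at h1
        simp only [abs_zero, mul_zero] at h1
        linarith [abs_nonneg v.2.2]
      have hq : |v.2.2 / v.2.1| < ε := by
        rw [abs_div, div_lt_iff₀ (abs_pos.mpr hv1)]
        exact h1
      have e := F1 v.1 v.2.1 0 (v.2.2 / v.2.1) h0ε hq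
      rw [show v.1 * 0 + v.2.1 * (v.2.2 / v.2.1) = v.2.2 by field_simp; ring] at e
      rw [hveta v] at e
      have hBq := hψ _ hq
      simp only [hf'_def, hcs_def]
      rw [e, hBq]
      field_simp
      ring
  -- main claim : f' vanishes identically
  have hE1R : E1 ∈ Rset := by
    left
    simp only [E1, hR_def, Set.mem_setOf_eq, abs_zero, abs_one, mul_one]
    exact hε
  have hE2R : E2 ∈ Rset := by
    right
    simp only [E2, hR_def, Set.mem_setOf_eq, abs_zero, abs_one, mul_one]
    exact hε
  -- given a point of Rset and any vector, we can move a little inside Rset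
  have hmove : ∀ y ∈ Rset, ∀ w : V3, ∃ δ : ℝ, δ ≠ 0 ∧ y + δ • w ∈ Rset := by
    intro y hy w
    obtain ⟨ρ, hρ, hball⟩ := Metric.isOpen_iff.mp hRopen y hy
    refine ⟨ρ / (2 * (‖w‖ + 1)), by positivity, ?_⟩
    apply hball
    rw [Metric.mem_ball, dist_eq_norm]
    have h1 : y + (ρ / (2 * (‖w‖ + 1))) • w - y = (ρ / (2 * (‖w‖ + 1))) • w := by abel
    rw [h1, norm_smul, Real.norm_eq_abs, abs_of_pos (by positivity)]
    have h2 : ρ / (2 * (‖w‖ + 1)) * (‖w‖ + 1) = ρ / 2 := by field_simp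
    nlinarith [norm_nonneg w, norm_nonneg w]
  have hZ : ∀ x : V3, f' x = 0 := by
    by_contra hcon
    push_neg at hcon
    obtain ⟨x, hx⟩ := hcon
    have hf'0 : f' 0 = 0 := by
      have := hf'h 0 0
      simpa using this
    have hx0 : x ≠ 0 := fun h => hx (h ▸ hf'0)
    by_cases hx3 : x.2.2 = 0
    · apply hx
      apply hR
      have hor : x.1 ≠ 0 ∨ x.2.1 ≠ 0 := by
        by_contra hb
        push_neg at hb
        apply hx0
        have hxe : x = (x.1, x.2.1, x.2.2) := rfl
        rw [hxe, hb.1, hb.2, hx3]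
        rfl
      rcases hor with h | h
      · left
        rw [hx3]
        simpa using mul_pos hε (abs_pos.mpr h)
      · right
        rw [hx3]
        simpa using mul_pos hε (abs_pos.mpr h)
    · -- main case : x is not in the base plane
      have HG : ∀ u : V3, LinOn g x u := by
        intro u
        by_cases hy0 : u.2.2 • x - x.2.2 • u = 0
        · have h1 : x.2.2 • u = u.2.2 • x := by
            rw [sub_eq_zero] at hy0
            exact hy0.symm
          have hu : u = (u.2.2 / x.2.2) • x := by
            calc u = (x.2.2)⁻¹ • (x.2.2 • u) := by
                  rw [smul_smul, inv_mul_cancel₀ hx3, one_smul]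
              _ = (x.2.2)⁻¹ • (u.2.2 • x) := by rw [h1]
              _ = (u.2.2 / x.2.2) • x := by rw [smul_smul, div_eq_inv_mul]
          rw [hu]
          exact linOn_line hgh x _
        · rcases hyp x u with hF | hG
          · exfalso
            set y := u.2.2 • x - x.2.2 • u with hy_def
            have hy3 : y.2.2 = 0 := by
              simp only [hy_def, Prod.snd_sub, Prod.smul_snd, smul_eq_mul]
              ring
            have hyR : y ∈ Rset := by
              have hor : y.1 ≠ 0 ∨ y.2.1 ≠ 0 := by
                by_contra hb
                push_neg at hb
                apply hy0
                have hye : y = (y.1, y.2.1, y.2.2) := rfl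
                rw [hye, hb.1, hb.2, hy3]
                rfl
              rcases hor with h | h
              · left
                rw [hy3]
                simpa using mul_pos hε (abs_pos.mpr h)
              · right
                rw [hy3]
                simpa using mul_pos hε (abs_pos.mpr h)
            obtain ⟨δ, hδ, hmem⟩ := hmove y hyR x
            have hfy : f' y = 0 := hR y hyR
            have hfad : f' (y + δ • x) = f' y + δ * f' x := by
              have h2 := hLin' x u hF u.2.2 (-x.2.2) δ 0
              have hv1 : u.2.2 • x + (-x.2.2) • u = y := by
                rw [hy_def, neg_smul, sub_eq_add_neg]
              have hv2 : δ • x + (0:ℝ) • u = δ • x := by simp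
              rw [hv1, hv2] at h2
              simp only [dlt] at h2
              have h3 : f' (δ • x) = δ * f' x := hf'h δ x
              linarith
            have h4 := hR _ hmem
            rw [hfad, hfy, zero_add] at h4
            exact hx ((mul_eq_zero.mp h4).resolve_left hδ)
          · exact hG
      have hpen : ∀ (v : V3) (s : ℝ), g (v + s • x) = g v + s * g x := by
        intro v s
        have h2 := HG v 0 1 s 0
        simp only [dlt, zero_smul, one_smul, zero_add, add_zero] at h2
        have h3 : g (s • x) = s * g x := hgh s x
        linarith
      have hπ : ∀ u v : V3,
          dlt g u v = dlt g (u - (u.2.2 / x.2.2) • x) (v - (v.2.2 / x.2.2) • x) := by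
        intro u v
        have e1 : g u = g (u - (u.2.2 / x.2.2) • x) + (u.2.2 / x.2.2) * g x := by
          have h5 := hpen (u - (u.2.2 / x.2.2) • x) (u.2.2 / x.2.2)
          rw [sub_add_cancel] at h5
          exact h5
        have e2 : g v = g (v - (v.2.2 / x.2.2) • x) + (v.2.2 / x.2.2) * g x := by
          have h5 := hpen (v - (v.2.2 / x.2.2) • x) (v.2.2 / x.2.2)
          rw [sub_add_cancel] at h5
          exact h5
        have e3 : g (u + v) = g ((u - (u.2.2 / x.2.2) • x) + (v - (v.2.2 / x.2.2) • x))
            + (u.2.2 / x.2.2 + v.2.2 / x.2.2) * g x := by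
          have h5 := hpen ((u - (u.2.2 / x.2.2) • x) + (v - (v.2.2 / x.2.2) • x))
            (u.2.2 / x.2.2 + v.2.2 / x.2.2)
          have h6 : (u - (u.2.2 / x.2.2) • x) + (v - (v.2.2 / x.2.2) • x)
              + (u.2.2 / x.2.2 + v.2.2 / x.2.2) • x = u + v := by
            rw [add_smul]
            abel
          rw [h6] at h5
          exact h5
        simp only [dlt]
        rw [e1, e2, e3]
        ring
      have hsub : ∀ y' : V3, y' - (y'.2.2 / x.2.2) • x ≠ 0 → f' y' = 0 := by
        intro y' hP
        set c0 : ℝ := y'.2.2 / x.2.2 with hc0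
        set P : V3 := y' - c0 • x with hP_def
        have hP3 : P.2.2 = 0 := by
          simp only [hP_def, Prod.snd_sub, Prod.smul_snd, smul_eq_mul, hc0]
          field_simp
          ring
        have hPor : P.1 ≠ 0 ∨ P.2.1 ≠ 0 := by
          by_contra hb
          push_neg at hb
          apply hP
          have hPe : P = (P.1, P.2.1, P.2.2) := rfl
          rw [hPe, hb.1, hb.2, hP3]
          rfl
        obtain ⟨lam, mu, hlm, hlm0⟩ : ∃ lam mu : ℝ,
            P.1 * lam + P.2.1 * mu = c0 ∧ (lam = 0 ∨ mu = 0) := by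
          rcases hPor with h | h
          · exact ⟨c0 / P.1, 0, by field_simp; ring, Or.inr rfl⟩
          · exact ⟨0, c0 / P.2.1, by field_simp; ring, Or.inl rfl⟩
        set u' : V3 := E1 + lam • x with hu'_def
        set v' : V3 := E2 + mu • x with hv'_def
        have hy'eq : y' = P.1 • u' + P.2.1 • v' := by
          have h1 : y' = P + c0 • x := by
            rw [hP_def]
            abel
          rw [h1, hu'_def, hv'_def]
          have hPe : P = (P.1, P.2.1, P.2.2) := rfl
          rw [hPe, hP3]
          simp only [E1, E2, Prod.ext_iff, Prod.fst_add, Prod.snd_add, Prod.smul_fst,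
            Prod.smul_snd, smul_eq_mul, Prod.mk_add_mk, Prod.smul_mk]
          refine ⟨by linear_combination x.1 * hlm.symm, by linear_combination x.2.1 * hlm.symm,
            by linear_combination x.2.2 * hlm.symm⟩
        have hπu' : u' - (u'.2.2 / x.2.2) • x = E1 := by
          have h3 : u'.2.2 = lam * x.2.2 := by
            simp [hu'_def, E1]
          rw [h3, mul_div_assoc, div_self hx3, mul_one, hu'_def]
          abel
        have hπv' : v' - (v'.2.2 / x.2.2) • x = E2 := by
          have h3 : v'.2.2 = mu * x.2.2 := by
            simp [hv'_def, E2]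
          rw [h3, mul_div_assoc, div_self hx3, mul_one, hv'_def]
          abel
        have hdne : dlt g u' v' ≠ 0 := by
          rw [hπ u' v', hπu', hπv']
          exact hg
        have hLf : LinOn f u' v' := by
          rcases hyp u' v' with h | h
          · exact h
          · exfalso
            apply hdne
            have := h 1 0 0 1
            simpa using this
        have hLf' := hLin' _ _ hLf
        have huv0 : f' u' = 0 ∧ f' v' = 0 := by
          rcases hlm0 with h0 | h0
          · -- lam = 0 : u' = E1
            have hu'E : u' = E1 := by
              rw [hu'_def, h0, zero_smul, add_zero]
            have hfu' : f' u' = 0 := by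
              rw [hu'E]
              exact hR E1 hE1R
            obtain ⟨δ, hδ, hmem⟩ := hmove E1 hE1R v'
            have hfad : f' (E1 + δ • v') = f' E1 + δ * f' v' := by
              have h2 := hLf' 1 0 0 δ
              have hv1 : (1:ℝ) • u' + (0:ℝ) • v' = E1 := by
                rw [one_smul, zero_smul, add_zero, hu'E]
              have hv2 : (0:ℝ) • u' + δ • v' = δ • v' := by
                rw [zero_smul, zero_add]
              rw [hv1, hv2] at h2
              simp only [dlt] at h2
              have h3 : f' (δ • v') = δ * f' v' := hf'h δ v'
              linarith
            have h4 := hR _ hmem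
            rw [hfad] at h4
            have h5 : f' E1 = 0 := hR E1 hE1R
            rw [h5, zero_add] at h4
            exact ⟨hfu', (mul_eq_zero.mp h4).resolve_left hδ⟩
          · -- mu = 0 : v' = E2
            have hv'E : v' = E2 := by
              rw [hv'_def, h0, zero_smul, add_zero]
            have hfv' : f' v' = 0 := by
              rw [hv'E]
              exact hR E2 hE2R
            obtain ⟨δ, hδ, hmem⟩ := hmove E2 hE2R u'
            have hfad : f' (E2 + δ • u') = f' E2 + δ * f' u' := by
              have h2 := hLf' 0 1 δ 0
              have hv1 : (0:ℝ) • u' + (1:ℝ) • v' = E2 := by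
                rw [one_smul, zero_smul, zero_add, hv'E]
              have hv2 : δ • u' + (0:ℝ) • v' = δ • u' := by
                rw [zero_smul, add_zero]
              rw [hv1, hv2] at h2
              simp only [dlt] at h2
              have h3 : f' (δ • u') = δ * f' u' := hf'h δ u'
              linarith
            have h4 := hR _ hmem
            rw [hfad] at h4
            have h5 : f' E2 = 0 := hR E2 hE2R
            rw [h5, zero_add] at h4
            exact ⟨(mul_eq_zero.mp h4).resolve_left hδ, hfv'⟩
        have heval : f' (P.1 • u' + P.2.1 • v') = P.1 * f' u' + P.2.1 * f' v' :=
          linOn_eval hf'h hLf' P.1 P.2.1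
        rw [← hy'eq] at heval
        rw [heval, huv0.1, huv0.2]
        ring
      have htail : ∀ t : ℝ, t ≠ 0 → f' (x + t • E1) = 0 := by
        intro t ht
        apply hsub
        have h3 : (x + t • E1).2.2 = x.2.2 := by
          simp [E1]
        rw [h3, div_self hx3, one_smul, add_sub_cancel_left]
        intro hcontra
        apply ht
        have := congrArg Prod.fst hcontra
        simpa [E1] using this
      have hlim : Filter.Tendsto (fun t : ℝ => f' (x + t • E1)) (nhdsWithin 0 {(0:ℝ)}ᶜ)
          (nhds (f' x)) := by
        have hc : Continuous fun t : ℝ => f' (x + t • E1) :=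
          hf'c.comp (continuous_const.add (continuous_id.smul continuous_const))
        have h2 := hc.tendsto 0
        have h0 : x + (0:ℝ) • E1 = x := by simp
        rw [h0] at h2
        exact h2.mono_left nhdsWithin_le_nhds
      have hlim0 : Filter.Tendsto (fun t : ℝ => f' (x + t • E1)) (nhdsWithin 0 {(0:ℝ)}ᶜ)
          (nhds 0) := by
        apply Filter.Tendsto.congr' _ tendsto_const_nhds
        filter_upwards [self_mem_nhdsWithin] with t ht
        exact (htail t ht).symm
      exact hx (tendsto_nhds_unique hlim hlim0)
  -- conclude
  apply hf
  have hfv : ∀ v : V3, f v = cs v := by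
    intro v
    have := hZ v
    simp only [hf'_def] at this
    linarith
  simp only [dlt, hfv, hcs_def, Prod.fst_add, Prod.snd_add]
  ring

end Lem3

section Core

variable {E : Type*} [NormedAddCommGroup E] [NormedSpace ℝ E]

theorem lem3E {f g : E → ℝ} (hfc : Continuous f) (hgc : Continuous g)
    (hfh : ∀ (t : ℝ) u, f (t • u) = t * f u) (hgh : ∀ (t : ℝ) u, g (t • u) = t * g u)
    (hyp : ∀ u v, LinOn f u v ∨ LinOn g u v)
    (c d w : E) (hg : dlt g c d ≠ 0)
    (a b : E) (ha : ∃ s t r : ℝ, a = s • c + t • d + r • w)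
    (hb : ∃ s t r : ℝ, b = s • c + t • d + r • w) (hf : dlt f a b ≠ 0) : False := by
  obtain ⟨sa, ta, ra, haw⟩ := ha
  obtain ⟨sb, tb, rb, hbw⟩ := hb
  set e : V3 → E := fun v => v.1 • c + v.2.1 • d + v.2.2 • w with he_def
  have headd : ∀ v v' : V3, e (v + v') = e v + e v' := by
    intro v v'
    simp only [he_def, Prod.fst_add, Prod.snd_add, add_smul]
    abel
  have hesmul : ∀ (t : ℝ) (v : V3), e (t • v) = t • e v := by
    intro t v
    simp only [he_def, Prod.smul_fst, Prod.smul_snd, smul_eq_mul, mul_smul, smul_add]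
  have hec : Continuous e := by
    exact ((continuous_fst.smul continuous_const).add
      (continuous_snd.fst.smul continuous_const)).add
      (continuous_snd.snd.smul continuous_const)
  have hcombo : ∀ (s t : ℝ) (u v : V3), e (s • u + t • v) = s • e u + t • e v := by
    intro s t u v
    rw [headd, hesmul, hesmul]
  have hdlt_tr : ∀ (F : E → ℝ) (u v : V3), dlt (F ∘ e) u v = dlt F (e u) (e v) := by
    intro F u v
    simp only [dlt, Function.comp_apply, headd]
  have hLin_tr : ∀ (F : E → ℝ) (u v : V3), LinOn F (e u) (e v) → LinOn (F ∘ e) u v := by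
    intro F u v h s t s' t'
    rw [hdlt_tr, hcombo, hcombo]
    exact h s t s' t'
  refine lem3 (f := f ∘ e) (g := g ∘ e) (hfc.comp hec) (hgc.comp hec)
    (fun t v => by simp only [Function.comp_apply, hesmul, hfh])
    (fun t v => by simp only [Function.comp_apply, hesmul, hgh])
    (fun u v => (hyp (e u) (e v)).imp (hLin_tr f u v) (hLin_tr g u v))
    ?_ ((sa, ta, ra) : V3) ((sb, tb, rb) : V3) ?_
  · rw [hdlt_tr]
    have h1 : e E1 = c := by simp [he_def, E1]
    have h2 : e E2 = d := by simp [he_def, E2]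
    rw [h1, h2]
    exact hg
  · rw [hdlt_tr]
    have h1 : e (sa, ta, ra) = a := by rw [haw]
    have h2 : e (sb, tb, rb) = b := by rw [hbw]
    rw [h1, h2]
    exact hf

theorem core {f g : E → ℝ} (hfc : Continuous f) (hgc : Continuous g)
    (hfh : ∀ (t : ℝ) u, f (t • u) = t * f u) (hgh : ∀ (t : ℝ) u, g (t • u) = t * g u)
    (hyp : ∀ u v, LinOn f u v ∨ LinOn g u v) :
    (∀ u v, f (u + v) = f u + f v) ∨ (∀ u v, g (u + v) = g u + g v) := by
  by_contra hcon
  push_neg at hcon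
  obtain ⟨⟨a, b, hab⟩, ⟨c, d, hcd⟩⟩ := hcon
  have hfab : dlt f a b ≠ 0 := by
    simp only [dlt]
    intro h
    exact hab (by linarith)
  have hgcd : dlt g c d ≠ 0 := by
    simp only [dlt]
    intro h
    exact hcd (by linarith)
  have hyp' : ∀ u v, LinOn g u v ∨ LinOn f u v := fun u v => (hyp u v).symm
  -- f is additive along the plane of c, d
  have hA : ∀ (s t : ℝ) (u : E), dlt f (s • c + t • d) u = 0 := by
    intro s t u
    by_contra hne
    exact lem3E hfc hgc hfh hgh hyp c d u hgcd (s • c + t • d) u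
      ⟨s, t, 0, by simp⟩ ⟨0, 0, 1, by simp⟩ hne
  -- g is additive along the plane of a, b
  have hB : ∀ (s t : ℝ) (u : E), dlt g (s • a + t • b) u = 0 := by
    intro s t u
    by_contra hne
    exact lem3E hgc hfc hgh hfh hyp' a b u hfab (s • a + t • b) u
      ⟨s, t, 0, by simp⟩ ⟨0, 0, 1, by simp⟩ hne
  have hLfcd : LinOn f c d :=
    (hyp c d).resolve_right (fun h => hgcd (by simpa using h 1 0 0 1))
  have hLgab : LinOn g a b :=
    (hyp' a b).resolve_right (fun h => hfab (by simpa using h 1 0 0 1))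
  have key_f : dlt f (c + a) (d + b) = dlt f a b := by
    have e1 : f ((c + d) + (a + b)) = f (c + d) + f (a + b) := by
      have h := hA 1 1 (a + b)
      simp only [dlt, one_smul] at h
      linarith
    have e2 : f (c + a) = f c + f a := by
      have h := hA 1 0 a
      simp only [dlt, one_smul, zero_smul, add_zero] at h
      linarith
    have e3 : f (d + b) = f d + f b := by
      have h := hA 0 1 b
      simp only [dlt, one_smul, zero_smul, zero_add] at h
      linarith
    have e4 : f (c + d) = f c + f d := by
      have h := hLfcd 1 0 0 1
      simp only [dlt, one_smul, zero_smul, add_zero, zero_add] at h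
      linarith
    have hvv : (c + a) + (d + b) = (c + d) + (a + b) := by abel
    simp only [dlt]
    rw [hvv, e1, e2, e3, e4]
    ring
  have key_g : dlt g (c + a) (d + b) = dlt g c d := by
    have e1 : g ((a + b) + (c + d)) = g (a + b) + g (c + d) := by
      have h := hB 1 1 (c + d)
      simp only [dlt, one_smul] at h
      linarith
    have e2 : g (a + c) = g a + g c := by
      have h := hB 1 0 c
      simp only [dlt, one_smul, zero_smul, add_zero] at h
      linarith
    have e3 : g (b + d) = g b + g d := by
      have h := hB 0 1 d
      simp only [dlt, one_smul, zero_smul, zero_add] at h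
      linarith
    have e4 : g (a + b) = g a + g b := by
      have h := hLgab 1 0 0 1
      simp only [dlt, one_smul, zero_smul, add_zero, zero_add] at h
      linarith
    have hvv : (c + a) + (d + b) = (a + b) + (c + d) := by abel
    have hca : c + a = a + c := by abel
    have hdb : d + b = b + d := by abel
    simp only [dlt]
    rw [hvv, e1, hca, e2, hdb, e3, e4]
    ring
  rcases hyp (c + a) (d + b) with h | h
  · apply hfab
    rw [← key_f]
    simpa using h 1 0 0 1
  · apply hgcd
    rw [← key_g]
    simpa using h 1 0 0 1

end Core

section Support

open RealInnerProductSpace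

variable {n : ℕ}

local notation "E" => EuclideanSpace ℝ (Fin n)

/-- support function -/
noncomputable def sfn (K : Set (EuclideanSpace ℝ (Fin n))) (u : EuclideanSpace ℝ (Fin n)) : ℝ :=
  sSup ((fun x => ⟪u, x⟫) '' K)

theorem sfn_isGreatest {K : Set (EuclideanSpace ℝ (Fin n))} (hne : K.Nonempty)
    (hc : IsCompact K) (u : E) :
    IsGreatest ((fun x => ⟪u, x⟫) '' K) (sfn K u) := by
  have hcont : ContinuousOn (fun x : EuclideanSpace ℝ (Fin n) => ⟪u, x⟫) K :=
    (Continuous.inner continuous_const continuous_id).continuousOn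
  obtain ⟨x, hxK, hmax⟩ := hc.exists_isMaxOn hne hcont
  have hg : IsGreatest ((fun x => ⟪u, x⟫) '' K) ⟪u, x⟫ := by
    constructor
    · exact ⟨x, hxK, rfl⟩
    · rintro _ ⟨y, hyK, rfl⟩
      exact hmax hyK
  rw [sfn, hg.csSup_eq]
  exact hg

theorem sfn_le {K : Set (EuclideanSpace ℝ (Fin n))} (hne : K.Nonempty) (hc : IsCompact K)
    {u : E} {x : E} (hx : x ∈ K) : ⟪u, x⟫ ≤ sfn K u :=
  (sfn_isGreatest hne hc u).2 ⟨x, hx, rfl⟩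

theorem sfn_exists {K : Set (EuclideanSpace ℝ (Fin n))} (hne : K.Nonempty) (hc : IsCompact K)
    (u : E) : ∃ x ∈ K, sfn K u = ⟪u, x⟫ := by
  obtain ⟨x, hx, hxe⟩ := (sfn_isGreatest hne hc u).1
  exact ⟨x, hx, hxe.symm⟩

theorem sfn_subadd {K : Set (EuclideanSpace ℝ (Fin n))} (hne : K.Nonempty) (hc : IsCompact K)
    (u v : E) : sfn K (u + v) ≤ sfn K u + sfn K v := by
  obtain ⟨x, hx, he⟩ := sfn_exists hne hc (u + v)
  rw [he, inner_add_left]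
  exact add_le_add (sfn_le hne hc hx) (sfn_le hne hc hx)

theorem sfn_smul {K : Set (EuclideanSpace ℝ (Fin n))} (hne : K.Nonempty) (hc : IsCompact K)
    {t : ℝ} (ht : 0 ≤ t) (u : E) : sfn K (t • u) = t * sfn K u := by
  obtain ⟨x, hx, he⟩ := sfn_exists hne hc (t • u)
  obtain ⟨y, hy, he'⟩ := sfn_exists hne hc u
  apply le_antisymm
  · rw [he, real_inner_smul_left]
    exact mul_le_mul_of_nonneg_left (sfn_le hne hc hx) ht
  · rw [he']
    calc t * ⟪u, y⟫ = ⟪t • u, y⟫ := (real_inner_smul_left _ _ _).symm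
      _ ≤ sfn K (t • u) := sfn_le hne hc hy

theorem sfn_continuous {K : Set (EuclideanSpace ℝ (Fin n))} (hne : K.Nonempty)
    (hc : IsCompact K) : Continuous (sfn K) := by
  obtain ⟨R, hR⟩ := hc.isBounded.exists_norm_le
  have key : ∀ u v : E, sfn K u ≤ sfn K v + (max R 0) * ‖u - v‖ := by
    intro u v
    obtain ⟨x, hx, he⟩ := sfn_exists hne hc u
    have h1 : ⟪u, x⟫ = ⟪v, x⟫ + ⟪u - v, x⟫ := by
      rw [← inner_add_left]
      norm_num
    rw [he, h1]
    have h2 : ⟪u - v, x⟫ ≤ ‖u - v‖ * ‖x‖ := real_inner_le_norm _ _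
    have h3 : ‖x‖ ≤ max R 0 := le_trans (hR x hx) (le_max_left _ _)
    have h4 : ⟪u - v, x⟫ ≤ max R 0 * ‖u - v‖ := by
      calc ⟪u - v, x⟫ ≤ ‖u - v‖ * ‖x‖ := h2
        _ ≤ ‖u - v‖ * max R 0 := by
            exact mul_le_mul_of_nonneg_left h3 (norm_nonneg _)
        _ = max R 0 * ‖u - v‖ := mul_comm _ _
    have h5 := sfn_le hne hc hx (u := v)
    linarith
  have hlip : LipschitzWith (Real.toNNReal (max R 0)) (sfn K) := by
    rw [lipschitzWith_iff_dist_le_mul]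
    intro u v
    rw [Real.dist_eq, dist_eq_norm]
    rw [abs_sub_le_iff]
    constructor
    · have := key u v
      have hcoe : (Real.toNNReal (max R 0) : ℝ) = max R 0 :=
        Real.coe_toNNReal _ (le_max_right _ _)
      rw [hcoe]
      linarith
    · have := key v u
      have hcoe : (Real.toNNReal (max R 0) : ℝ) = max R 0 :=
        Real.coe_toNNReal _ (le_max_right _ _)
      rw [hcoe]
      have hn : ‖v - u‖ = ‖u - v‖ := norm_sub_rev _ _
      rw [hn] at this
      linarith
  exact hlip.continuous

theorem sfn_determines {K₁ K₂ : Set (EuclideanSpace ℝ (Fin n))}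
    (hne₁ : K₁.Nonempty) (hc₁ : IsCompact K₁) (hcv₁ : Convex ℝ K₁)
    (hne₂ : K₂.Nonempty) (hc₂ : IsCompact K₂) (hcv₂ : Convex ℝ K₂)
    (h : ∀ u, sfn K₁ u = sfn K₂ u) : K₁ = K₂ := by
  have sub : ∀ (A B : Set (EuclideanSpace ℝ (Fin n))), A.Nonempty → IsCompact A →
      B.Nonempty → IsCompact B → Convex ℝ B → (∀ u, sfn A u ≤ sfn B u) → A ⊆ B := by
    intro A B hneA hcA hneB hcB hcvB hle x hx
    by_contra hxB
    obtain ⟨φ, s, hs1, hs2⟩ := geometric_hahn_banach_closed_point hcvB hcB.isClosed hxB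
    set w := (InnerProductSpace.toDual ℝ (EuclideanSpace ℝ (Fin n))).symm φ with hw
    have hwip : ∀ y, ⟪w, y⟫ = φ y := fun y => InnerProductSpace.toDual_symm_apply
    have h1 : sfn B w < s := by
      obtain ⟨y, hy, hye⟩ := sfn_exists hneB hcB w
      rw [hye, hwip]
      exact hs1 y hy
    have h2 : s < sfn A w := by
      calc s < φ x := hs2
        _ = ⟪w, x⟫ := (hwip x).symm
        _ ≤ sfn A w := sfn_le hneA hcA hx
    have := hle w
    linarith
  apply Set.Subset.antisymm
  · exact sub K₁ K₂ hne₁ hc₁ hne₂ hc₂ hcv₂ (fun u => (h u).le)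
  · exact sub K₂ K₁ hne₂ hc₂ hne₁ hc₁ hcv₁ (fun u => (h u).ge)

end Support

section Images

open RealInnerProductSpace Pointwise

variable {n : ℕ}

theorem sfn_affine_image {K : Set (EuclideanSpace ℝ (Fin n))} (hne : K.Nonempty)
    (hc : IsCompact K) (z : EuclideanSpace ℝ (Fin n)) (l : ℝ) (u : EuclideanSpace ℝ (Fin n)) :
    sfn ((fun x => z + l • x) '' K) u = ⟪u, z⟫ + sfn K (l • u) := by
  have him : (fun x => ⟪u, x⟫) '' ((fun x => z + l • x) '' K)
      = (fun x => ⟪u, z⟫ + ⟪l • u, x⟫) '' K := by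
    rw [Set.image_image]
    apply Set.image_congr
    intro x _
    rw [inner_add_right, real_inner_smul_right, real_inner_smul_left]
  obtain ⟨x, hx, he⟩ := sfn_exists hne hc (l • u)
  have hg : IsGreatest ((fun x => ⟪u, x⟫) '' ((fun x => z + l • x) '' K))
      (⟪u, z⟫ + sfn K (l • u)) := by
    rw [him]
    constructor
    · refine ⟨x, hx, ?_⟩
      simp only
      rw [← he]
    · rintro _ ⟨y, hy, rfl⟩
      exact add_le_add_right (sfn_le hne hc hy) _
  rw [sfn, hg.csSup_eq]

theorem sfn_proj_image {K : Set (EuclideanSpace ℝ (Fin n))} (hne : K.Nonempty)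
    (hc : IsCompact K) (L : Submodule ℝ (EuclideanSpace ℝ (Fin n)))
    (u : EuclideanSpace ℝ (Fin n)) :
    sfn (planeProj 0 L '' K) u = sfn K (L.orthogonalProjectionOnto u : EuclideanSpace ℝ (Fin n)) := by
  have hpp : ∀ x : EuclideanSpace ℝ (Fin n),
      planeProj 0 L x = (L.orthogonalProjectionOnto x : EuclideanSpace ℝ (Fin n)) := by
    intro x
    simp [planeProj]
  have him : (fun x => ⟪u, x⟫) '' (planeProj 0 L '' K)
      = (fun x => ⟪(L.orthogonalProjectionOnto u : EuclideanSpace ℝ (Fin n)), x⟫) '' K := by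
    rw [Set.image_image]
    apply Set.image_congr
    intro x _
    rw [hpp x]
    exact (Submodule.inner_starProjection_left_eq_right L u x).symm
  obtain ⟨x, hx, he⟩ := sfn_exists hne hc (L.orthogonalProjectionOnto u : EuclideanSpace ℝ (Fin n))
  have hg : IsGreatest ((fun x => ⟪u, x⟫) '' (planeProj 0 L '' K))
      (sfn K (L.orthogonalProjectionOnto u : EuclideanSpace ℝ (Fin n))) := by
    rw [him]
    constructor
    · exact ⟨x, hx, he.symm⟩
    · rintro _ ⟨y, hy, rfl⟩
      exact sfn_le hne hc hy
  rw [sfn, hg.csSup_eq]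

theorem affine_image_nonempty {K : Set (EuclideanSpace ℝ (Fin n))} (hne : K.Nonempty)
    (z : EuclideanSpace ℝ (Fin n)) (l : ℝ) : ((fun x => z + l • x) '' K).Nonempty :=
  hne.image _

theorem affine_image_compact {K : Set (EuclideanSpace ℝ (Fin n))} (hc : IsCompact K)
    (z : EuclideanSpace ℝ (Fin n)) (l : ℝ) : IsCompact ((fun x => z + l • x) '' K) :=
  hc.image (by fun_prop)

theorem affine_image_convex {K : Set (EuclideanSpace ℝ (Fin n))} (hcv : Convex ℝ K)
    (z : EuclideanSpace ℝ (Fin n)) (l : ℝ) : Convex ℝ ((fun x => z + l • x) '' K) := by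
  have h1 : (fun x => z + l • x) '' K = (fun y => z + y) '' (l • K) := by
    rw [← Set.image_smul, Set.image_image]
  rw [h1]
  exact (hcv.smul l).translate z

theorem planeProj_continuous (p : EuclideanSpace ℝ (Fin n))
    (L : Submodule ℝ (EuclideanSpace ℝ (Fin n))) : Continuous (planeProj p L) := by
  unfold planeProj
  exact continuous_const.add ((L.subtypeL.comp (L.orthogonalProjectionOnto)).continuous.comp
    (continuous_id.sub continuous_const))

theorem proj_image_convex {K : Set (EuclideanSpace ℝ (Fin n))} (hcv : Convex ℝ K)
    (p : EuclideanSpace ℝ (Fin n)) (L : Submodule ℝ (EuclideanSpace ℝ (Fin n))) :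
    Convex ℝ (planeProj p L '' K) := by
  intro x hx y hy a b ha hb hab
  obtain ⟨x', hx', rfl⟩ := hx
  obtain ⟨y', hy', rfl⟩ := hy
  refine ⟨a • x' + b • y', hcv hx' hy' ha hb hab, ?_⟩
  simp only [planeProj]
  have h1 : a • x' + b • y' - p = a • (x' - p) + b • (y' - p) := by
    rw [smul_sub, smul_sub,
      show a • x' - a • p + (b • y' - b • p) = a • x' + b • y' - (a • p + b • p) from by abel,
      show a • p + b • p = p from by rw [← add_smul, hab, one_smul]]
  rw [h1]
  rw [map_add, map_smul, map_smul]
  push_cast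
  have h3 : a • p + b • p = p := by rw [← add_smul, hab, one_smul]
  have h2 : a • (p + (L.orthogonalProjectionOnto (x' - p) : EuclideanSpace ℝ (Fin n)))
      + b • (p + (L.orthogonalProjectionOnto (y' - p) : EuclideanSpace ℝ (Fin n)))
      = (a • p + b • p) + (a • (L.orthogonalProjectionOnto (x' - p) : EuclideanSpace ℝ (Fin n))
        + b • (L.orthogonalProjectionOnto (y' - p) : EuclideanSpace ℝ (Fin n))) := by
    rw [smul_add, smul_add]
    abel
  rw [h2, h3]

end Images

section Chr

open RealInnerProductSpace Pointwise

variable {n : ℕ}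

theorem homothetic_iff_sfn {X₁ X₂ : Set (EuclideanSpace ℝ (Fin n))}
    (hne₁ : X₁.Nonempty) (hc₁ : IsCompact X₁) (hcv₁ : Convex ℝ X₁)
    (hne₂ : X₂.Nonempty) (hc₂ : IsCompact X₂) (hcv₂ : Convex ℝ X₂) :
    Homothetic X₁ X₂ ↔ ∃ (z : EuclideanSpace ℝ (Fin n)) (l : ℝ), l ≠ 0 ∧
      ∀ u, sfn X₁ u = ⟪u, z⟫ + sfn X₂ (l • u) := by
  constructor
  · rintro ⟨z, l, hl, rfl⟩
    exact ⟨z, l, hl, fun u => sfn_affine_image hne₂ hc₂ z l u⟩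
  · rintro ⟨z, l, hl, h⟩
    refine ⟨z, l, hl, ?_⟩
    apply sfn_determines hne₁ hc₁ hcv₁ (affine_image_nonempty hne₂ z l)
      (affine_image_compact hc₂ z l) (affine_image_convex hcv₂ z l)
    intro u
    rw [sfn_affine_image hne₂ hc₂ z l u]
    exact h u

theorem exists_superset_finrank (W : Submodule ℝ (EuclideanSpace ℝ (Fin n))) (m : ℕ)
    (h1 : Module.finrank ℝ W ≤ m) (h2 : m ≤ n) :
    ∃ L : Submodule ℝ (EuclideanSpace ℝ (Fin n)), W ≤ L ∧ Module.finrank ℝ L = m := by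
  induction m with
  | zero =>
    have h0 : Module.finrank ℝ W = 0 := Nat.le_zero.mp h1
    rw [Submodule.finrank_eq_zero] at h0
    exact ⟨⊥, h0.le, finrank_bot ℝ _⟩
  | succ m ih =>
    by_cases h : Module.finrank ℝ W = m + 1
    · exact ⟨W, le_rfl, h⟩
    · have h1' : Module.finrank ℝ W ≤ m := by omega
      obtain ⟨L, hWL, hL⟩ := ih h1' (by omega)
      have hLTop : L ≠ ⊤ := by
        intro hT
        rw [hT, finrank_top] at hL
        have hE : Module.finrank ℝ (EuclideanSpace ℝ (Fin n)) = n := finrank_euclideanSpace_fin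
        omega
      obtain ⟨x, -, hx⟩ := SetLike.exists_of_lt (lt_of_le_of_ne le_top hLTop : L < ⊤)
      refine ⟨L ⊔ Submodule.span ℝ {x}, le_trans hWL le_sup_left, ?_⟩
      have hx0 : x ≠ 0 := fun h0 => hx (h0 ▸ L.zero_mem)
      have hspan : Module.finrank ℝ (Submodule.span ℝ {x}) = 1 := finrank_span_singleton hx0
      have hinf : L ⊓ Submodule.span ℝ {x} = ⊥ := by
        rw [eq_bot_iff]
        rintro y hy
        rw [Submodule.mem_inf] at hy
        obtain ⟨hyL, hyS⟩ := hy
        obtain ⟨t, rfl⟩ := Submodule.mem_span_singleton.mp hyS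
        by_cases ht : t = 0
        · simp [ht]
        · exfalso
          apply hx
          have hmem := L.smul_mem t⁻¹ hyL
          rwa [smul_smul, inv_mul_cancel₀ ht, one_smul] at hmem
      have heq := Submodule.finrank_sup_add_finrank_inf_eq L (Submodule.span ℝ {x})
      rw [hinf, hspan, hL, finrank_bot] at heq
      omega

theorem finrank_span_pair_le (u v : EuclideanSpace ℝ (Fin n)) :
    Module.finrank ℝ (Submodule.span ℝ {u, v}) ≤ 2 := by
  have h1 : Submodule.span ℝ ({u, v} : Set (EuclideanSpace ℝ (Fin n)))
      = Submodule.span ℝ {u} ⊔ Submodule.span ℝ {v} := by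
    rw [← Submodule.span_union, Set.singleton_union]
  rw [h1]
  have hsing : ∀ w : EuclideanSpace ℝ (Fin n),
      Module.finrank ℝ (Submodule.span ℝ ({w} : Set (EuclideanSpace ℝ (Fin n)))) ≤ 1 := by
    intro w
    by_cases hw : w = 0
    · rw [hw, Submodule.span_zero_singleton, finrank_bot]
      omega
    · exact le_of_eq (finrank_span_singleton hw)
  have h2 := Submodule.finrank_sup_add_finrank_inf_eq
    (Submodule.span ℝ {u}) (Submodule.span ℝ ({v} : Set (EuclideanSpace ℝ (Fin n))))
  have h3 := hsing u
  have h4 := hsing v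
  omega

theorem linear_rep {f : EuclideanSpace ℝ (Fin n) → ℝ}
    (hadd : ∀ u v, f (u + v) = f u + f v) (hh : ∀ (t : ℝ) u, f (t • u) = t * f u) :
    ∃ z, ∀ u, f u = ⟪u, z⟫ := by
  set φ : EuclideanSpace ℝ (Fin n) →ₗ[ℝ] ℝ :=
    { toFun := f
      map_add' := hadd
      map_smul' := fun t u => by simp [hh] } with hφ
  set φc := LinearMap.toContinuousLinearMap φ with hφc
  refine ⟨(InnerProductSpace.toDual ℝ (EuclideanSpace ℝ (Fin n))).symm φc, fun u => ?_⟩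
  rw [real_inner_comm]
  have := InnerProductSpace.toDual_symm_apply
    (y := φc) (x := u) (𝕜 := ℝ) (E := EuclideanSpace ℝ (Fin n))
  rw [this]
  rfl

end Chr

section Width

open RealInnerProductSpace

variable {n : ℕ} {K : Set (EuclideanSpace ℝ (Fin n))}

theorem sfn_zero (hne : K.Nonempty) (hc : IsCompact K) : sfn K 0 = 0 := by
  have h := sfn_smul hne hc (le_refl (0:ℝ)) 0
  rwa [zero_smul, zero_mul] at h

theorem width_nonneg (hne : K.Nonempty) (hc : IsCompact K) (u : EuclideanSpace ℝ (Fin n)) :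
    0 ≤ sfn K u + sfn K (-u) := by
  have h := sfn_subadd hne hc u (-u)
  rw [add_neg_cancel, sfn_zero hne hc] at h
  linarith

theorem zero_width_dlt (hne : K.Nonempty) (hc : IsCompact K)
    {u v : EuclideanSpace ℝ (Fin n)}
    (hu : sfn K u + sfn K (-u) = 0) (hv : sfn K v + sfn K (-v) = 0)
    (huv : sfn K (u + v) + sfn K (-(u + v)) = 0) :
    sfn K (u + v) = sfn K u + sfn K v := by
  have h1 := sfn_subadd hne hc u v
  have h2 := sfn_subadd hne hc (-u) (-v)
  rw [show -u + -v = -(u + v) by abel] at h2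
  linarith

theorem zero_width_point (hne : K.Nonempty) (hc : IsCompact K)
    (hzw : ∀ u, sfn K u + sfn K (-u) = 0) : ∀ x ∈ K, ∀ y ∈ K, x = y := by
  intro x hx y hy
  have h1 : ∀ u, ⟪u, x - y⟫ ≤ 0 := by
    intro u
    have h2 : ⟪u, x⟫ ≤ sfn K u := sfn_le hne hc hx
    have h3 : ⟪-u, y⟫ ≤ sfn K (-u) := sfn_le hne hc hy
    have h4 : ⟪u, x - y⟫ = ⟪u, x⟫ + ⟪-u, y⟫ := by
      rw [inner_sub_right, inner_neg_left]
      ring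
    have h5 := hzw u
    linarith
  have h6 := h1 (x - y)
  rw [real_inner_self_nonpos] at h6
  rw [sub_eq_zero] at h6
  exact h6

end Width

section Main

open RealInnerProductSpace

set_option maxHeartbeats 2000000 in
theorem homothetic_iff_projections_homothetic_compact
    (n m : ℕ) (hn : 3 ≤ n) (hm₁ : 2 ≤ m) (hm₂ : m ≤ n - 1)
    (K₁ K₂ : Set (EuclideanSpace ℝ (Fin n)))
    (hne₁ : K₁.Nonempty) (hne₂ : K₂.Nonempty)
    (hc₁ : IsCompact K₁) (hc₂ : IsCompact K₂)
    (hcv₁ : Convex ℝ K₁) (hcv₂ : Convex ℝ K₂) :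
    Homothetic K₁ K₂ ↔
      ∀ (p : EuclideanSpace ℝ (Fin n)) (L : Submodule ℝ (EuclideanSpace ℝ (Fin n))),
        Module.finrank ℝ L = m →
        Homothetic (planeProj p L '' K₁) (planeProj p L '' K₂) := by
  constructor
  · -- forward direction
    rintro ⟨z, l, hl, hK⟩ p L hL
    refine ⟨p + (L.orthogonalProjectionOnto (z - p) : EuclideanSpace ℝ (Fin n))
      + l • (L.orthogonalProjectionOnto p : EuclideanSpace ℝ (Fin n)) - l • p, l, hl, ?_⟩
    rw [hK, Set.image_image, Set.image_image]
    apply Set.image_congr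
    intro x _
    simp only [planeProj]
    have harg : z + l • x - p = (z - p) + l • (x - p) + l • p := by
      rw [smul_sub]
      abel
    rw [harg, map_add, map_add, map_smul, map_smul]
    push_cast
    rw [smul_add]
    abel
  · -- reverse direction
    intro hproj
    have hmn : m ≤ n := by omega
    have R1 : ∀ L : Submodule ℝ (EuclideanSpace ℝ (Fin n)), Module.finrank ℝ L = m →
        ∃ (z : EuclideanSpace ℝ (Fin n)) (l : ℝ), l ≠ 0 ∧
          ∀ u ∈ L, sfn K₁ u = ⟪u, z⟫ + sfn K₂ (l • u) := by
      intro L hL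
      have hh := hproj 0 L hL
      rw [homothetic_iff_sfn (hne₁.image _) (hc₁.image (planeProj_continuous 0 L))
        (proj_image_convex hcv₁ 0 L) (hne₂.image _) (hc₂.image (planeProj_continuous 0 L))
        (proj_image_convex hcv₂ 0 L)] at hh
      obtain ⟨z, l, hl, he⟩ := hh
      refine ⟨z, l, hl, fun u hu => ?_⟩
      have h2 := he u
      rw [sfn_proj_image hne₁ hc₁ L u, sfn_proj_image hne₂ hc₂ L (l • u),
        ← Submodule.starProjection_apply, Submodule.starProjection_eq_self_iff.mpr hu,
        ← Submodule.starProjection_apply,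
        Submodule.starProjection_eq_self_iff.mpr (L.smul_mem l hu)] at h2
      exact h2
    have R2 : ∀ u v : EuclideanSpace ℝ (Fin n), ∃ (z : EuclideanSpace ℝ (Fin n)) (l : ℝ),
        l ≠ 0 ∧ ∀ s t : ℝ, sfn K₁ (s • u + t • v)
          = ⟪s • u + t • v, z⟫ + sfn K₂ (l • (s • u + t • v)) := by
      intro u v
      obtain ⟨L, hWL, hL⟩ := exists_superset_finrank (Submodule.span ℝ {u, v}) m
        (le_trans (finrank_span_pair_le u v) hm₁) hmn
      obtain ⟨z, l, hl, he⟩ := R1 L hL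
      refine ⟨z, l, hl, fun s t => ?_⟩
      apply he
      apply hWL
      apply Submodule.add_mem
      · exact Submodule.smul_mem _ _ (Submodule.subset_span (Set.mem_insert u {v}))
      · exact Submodule.smul_mem _ _ (Submodule.subset_span (Set.mem_insert_of_mem u rfl))
    -- width relation coming from a projection identity
    have wrel_of : ∀ (u v z : EuclideanSpace ℝ (Fin n)) (l : ℝ),
        (∀ s t : ℝ, sfn K₁ (s • u + t • v)
          = ⟪s • u + t • v, z⟫ + sfn K₂ (l • (s • u + t • v))) →
        ∀ s t : ℝ, sfn K₁ (s • u + t • v) + sfn K₁ (-(s • u + t • v))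
          = |l| * (sfn K₂ (s • u + t • v) + sfn K₂ (-(s • u + t • v))) := by
      intro u v z l he s t
      have h1 := he s t
      have h2 := he (-s) (-t)
      rw [show (-s) • u + (-t) • v = -(s • u + t • v) by rw [neg_smul, neg_smul]; abel] at h2
      rw [inner_neg_left] at h2
      set x := s • u + t • v with hx_def
      rcases le_or_gt 0 l with hl0 | hl0
      · rw [abs_of_nonneg hl0]
        rw [sfn_smul hne₂ hc₂ hl0] at h1
        rw [sfn_smul hne₂ hc₂ hl0] at h2
        rw [mul_add]
        linarith
      · rw [abs_of_neg hl0]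
        have hlpos : (0:ℝ) ≤ -l := by linarith
        rw [show l • x = (-l) • (-x) by rw [neg_smul, smul_neg, neg_neg],
          sfn_smul hne₂ hc₂ hlpos] at h1
        rw [show l • -x = (-l) • x by rw [neg_smul, smul_neg], sfn_smul hne₂ hc₂ hlpos] at h2
        rw [mul_add]
        linarith
    have wrel : ∀ u v : EuclideanSpace ℝ (Fin n), ∃ lab : ℝ, 0 < lab ∧ ∀ s t : ℝ,
        sfn K₁ (s • u + t • v) + sfn K₁ (-(s • u + t • v))
          = lab * (sfn K₂ (s • u + t • v) + sfn K₂ (-(s • u + t • v))) := by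
      intro u v
      obtain ⟨z, l, hl, he⟩ := R2 u v
      exact ⟨|l|, abs_pos.mpr hl, wrel_of u v z l he⟩
    by_cases hdeg : ∀ u : EuclideanSpace ℝ (Fin n), sfn K₂ u + sfn K₂ (-u) = 0
    · -- K₁ and K₂ are singletons
      obtain ⟨x₁, hx₁⟩ := id hne₁
      obtain ⟨x₂, hx₂⟩ := id hne₂
      have hzw1 : ∀ u, sfn K₁ u + sfn K₁ (-u) = 0 := by
        intro u
        obtain ⟨lab, hlab, he⟩ := wrel u u
        have h1 := he 1 0
        rw [show (1:ℝ) • u + (0:ℝ) • u = u by simp] at h1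
        rw [h1, hdeg u, mul_zero]
      have hpt₁ := zero_width_point hne₁ hc₁ hzw1
      have hpt₂ := zero_width_point hne₂ hc₂ hdeg
      refine ⟨x₁ - x₂, 1, one_ne_zero, ?_⟩
      ext y
      constructor
      · intro hy
        refine ⟨x₂, hx₂, ?_⟩
        simp only [one_smul]
        rw [hpt₁ y hy x₁ hx₁]
        abel
      · rintro ⟨x, hx, rfl⟩
        simp only [one_smul]
        rw [hpt₂ x hx x₂ hx₂, show x₁ - x₂ + x₂ = x₁ by abel]
        exact hx₁
    · -- main case
      push_neg at hdeg
      obtain ⟨u₀, hu₀⟩ := hdeg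
      have hw₀pos : 0 < sfn K₂ u₀ + sfn K₂ (-u₀) :=
        lt_of_le_of_ne (width_nonneg hne₂ hc₂ u₀) (Ne.symm hu₀)
      set μ : ℝ := (sfn K₁ u₀ + sfn K₁ (-u₀)) / (sfn K₂ u₀ + sfn K₂ (-u₀)) with hμ
      have hμrel : ∀ u, sfn K₁ u + sfn K₁ (-u) = μ * (sfn K₂ u + sfn K₂ (-u)) := by
        intro u
        obtain ⟨lab, hlab, he⟩ := wrel u₀ u
        have h1 := he 1 0
        have h2 := he 0 1
        rw [show (1:ℝ) • u₀ + (0:ℝ) • u = u₀ by simp] at h1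
        rw [show (0:ℝ) • u₀ + (1:ℝ) • u = u by simp] at h2
        have hlabμ : lab = μ := by
          rw [hμ, h1]
          field_simp
        rw [← hlabμ]
        exact h2
      have hμpos : 0 < μ := by
        obtain ⟨lab, hlab, he⟩ := wrel u₀ u₀
        have h1 := he 1 0
        rw [show (1:ℝ) • u₀ + (0:ℝ) • u₀ = u₀ by simp] at h1
        rw [hμ, h1]
        apply div_pos (mul_pos hlab hw₀pos) hw₀pos
      set f : EuclideanSpace ℝ (Fin n) → ℝ := fun u => sfn K₁ u - μ * sfn K₂ u with hf_def
      set g : EuclideanSpace ℝ (Fin n) → ℝ := fun u => sfn K₁ u - μ * sfn K₂ (-u) with hg_def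
      have hfh : ∀ (t : ℝ) (u : EuclideanSpace ℝ (Fin n)), f (t • u) = t * f u := by
        intro t u
        rcases le_or_gt 0 t with ht | ht
        · simp only [hf_def]
          rw [sfn_smul hne₁ hc₁ ht, sfn_smul hne₂ hc₂ ht]
          ring
        · have h1 : t • u = (-t) • (-u) := by rw [neg_smul, smul_neg, neg_neg]
          have hmt : (0:ℝ) ≤ -t := by linarith
          simp only [hf_def]
          rw [h1, sfn_smul hne₁ hc₁ hmt, sfn_smul hne₂ hc₂ hmt]
          have h2 := hμrel u
          linear_combination (-t) * h2
      have hgh : ∀ (t : ℝ) (u : EuclideanSpace ℝ (Fin n)), g (t • u) = t * g u := by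
        intro t u
        rcases le_or_gt 0 t with ht | ht
        · simp only [hg_def]
          rw [sfn_smul hne₁ hc₁ ht, show -(t • u) = t • (-u) by rw [smul_neg],
            sfn_smul hne₂ hc₂ ht]
          ring
        · have h1 : t • u = (-t) • (-u) := by rw [neg_smul, smul_neg, neg_neg]
          have hmt : (0:ℝ) ≤ -t := by linarith
          simp only [hg_def]
          rw [h1, sfn_smul hne₁ hc₁ hmt, show -((-t) • (-u)) = (-t) • u by
            rw [neg_smul, smul_neg, neg_neg, neg_smul], sfn_smul hne₂ hc₂ hmt]
          have h2 := hμrel u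
          linear_combination (-t) * h2
      have hfc : Continuous f :=
        (sfn_continuous hne₁ hc₁).sub (continuous_const.mul (sfn_continuous hne₂ hc₂))
      have hgc : Continuous g :=
        (sfn_continuous hne₁ hc₁).sub
          (continuous_const.mul ((sfn_continuous hne₂ hc₂).comp continuous_neg))
      have hyp : ∀ u v : EuclideanSpace ℝ (Fin n), LinOn f u v ∨ LinOn g u v := by
        intro u v
        obtain ⟨z, l, hl, he⟩ := R2 u v
        by_cases hzz : ∃ s t : ℝ, sfn K₂ (s • u + t • v) + sfn K₂ (-(s • u + t • v)) ≠ 0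
        · obtain ⟨s₁, t₁, hst⟩ := hzz
          have hww := wrel_of u v z l he
          have habs : |l| = μ := by
            have h1 := hww s₁ t₁
            have h2 := hμrel (s₁ • u + t₁ • v)
            have h3 : |l| * (sfn K₂ (s₁ • u + t₁ • v) + sfn K₂ (-(s₁ • u + t₁ • v)))
                = μ * (sfn K₂ (s₁ • u + t₁ • v) + sfn K₂ (-(s₁ • u + t₁ • v))) := by
              rw [← h1, ← h2]
            exact mul_right_cancel₀ hst h3
          rcases hl.lt_or_gt with hl0 | hl0
          · -- l < 0 : the g-side
            right
            have hlμ : l = -μ := by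
              rw [abs_of_neg hl0] at habs
              linarith
            have key : ∀ s t : ℝ, g (s • u + t • v) = ⟪s • u + t • v, z⟫ := by
              intro s t
              have h3 := he s t
              rw [hlμ, show (-μ) • (s • u + t • v) = μ • (-(s • u + t • v)) by
                rw [neg_smul, smul_neg], sfn_smul hne₂ hc₂ (le_of_lt hμpos)] at h3
              simp only [hg_def]
              linarith
            intro s t s' t'
            unfold dlt
            rw [show (s • u + t • v) + (s' • u + t' • v) = (s + s') • u + (t + t') • v by
              rw [add_smul, add_smul]; abel]
            rw [key, key, key]
            simp only [inner_add_left, real_inner_smul_left]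
            ring
          · -- l > 0 : the f-side
            left
            have hlμ : l = μ := by
              rw [abs_of_pos hl0] at habs
              linarith
            have key : ∀ s t : ℝ, f (s • u + t • v) = ⟪s • u + t • v, z⟫ := by
              intro s t
              have h3 := he s t
              rw [hlμ, sfn_smul hne₂ hc₂ (le_of_lt hμpos)] at h3
              simp only [hf_def]
              linarith
            intro s t s' t'
            unfold dlt
            rw [show (s • u + t • v) + (s' • u + t' • v) = (s + s') • u + (t + t') • v by
              rw [add_smul, add_smul]; abel]
            rw [key, key, key]
            simp only [inner_add_left, real_inner_smul_left]
            ring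
        · -- degenerate plane : everything is additive there
          push_neg at hzz
          left
          intro s t s' t'
          unfold dlt
          have hsum : (s • u + t • v) + (s' • u + t' • v) = (s + s') • u + (t + t') • v := by
            rw [add_smul, add_smul]; abel
          have hX2 := hzz s t
          have hY2 := hzz s' t'
          have hXY2 := hzz (s + s') (t + t')
          rw [← hsum] at hXY2
          have hX1 : sfn K₁ (s • u + t • v) + sfn K₁ (-(s • u + t • v)) = 0 := by
            rw [hμrel, hX2, mul_zero]
          have hY1 : sfn K₁ (s' • u + t' • v) + sfn K₁ (-(s' • u + t' • v)) = 0 := by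
            rw [hμrel, hY2, mul_zero]
          have hXY1 : sfn K₁ ((s • u + t • v) + (s' • u + t' • v))
              + sfn K₁ (-((s • u + t • v) + (s' • u + t' • v))) = 0 := by
            rw [hμrel, hXY2, mul_zero]
          have hadd2 := zero_width_dlt hne₂ hc₂ hX2 hY2 hXY2
          have hadd1 := zero_width_dlt hne₁ hc₁ hX1 hY1 hXY1
          simp only [hf_def]
          rw [hadd1, hadd2]
          ring
      rcases core hfc hgc hfh hgh hyp with hadd | hadd
      · obtain ⟨z, hz⟩ := linear_rep hadd hfh
        rw [homothetic_iff_sfn hne₁ hc₁ hcv₁ hne₂ hc₂ hcv₂]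
        refine ⟨z, μ, ne_of_gt hμpos, fun u => ?_⟩
        have h1 := hz u
        simp only [hf_def] at h1
        rw [sfn_smul hne₂ hc₂ (le_of_lt hμpos)]
        linarith
      · obtain ⟨z, hz⟩ := linear_rep hadd hgh
        rw [homothetic_iff_sfn hne₁ hc₁ hcv₁ hne₂ hc₂ hcv₂]
        refine ⟨z, -μ, by simp [ne_of_gt hμpos], fun u => ?_⟩
        have h1 := hz u
        simp only [hg_def] at h1
        rw [show (-μ) • u = μ • (-u) by rw [neg_smul, smul_neg],
          sfn_smul hne₂ hc₂ (le_of_lt hμpos)]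
        linarith

end Main
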